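/- arXiv:2304.02551 — 7 statements merged into one kernel-verified Lean document; each statement's English description precedes it below -/
import Mathlib

section
/- Let G be a finite cyclic group generated by σ, M a finitely generated Z_p[G]-module with H¹(G,M) = 0, and L ⊆ M a submodule with N(L) = N(M), where N is the norm element of Z_p[G]. Then L = M. -/
open MonoidAlgebra

section Aux
variable {p : ℕ} [Fact p.Prime] {n : ℕ}

local notation "R" => MonoidAlgebra ℤ_[p] (Multiplicative (ZMod (p ^ n)))

lemma aux_sigma_pow (σ : R)
    (hσ : σ = MonoidAlgebra.of ℤ_[p] (Multiplicative (ZMod (p ^ n)))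
      (Multiplicative.ofAdd (1 : ZMod (p ^ n)))) : σ ^ (p ^ n) = 1 := by
  subst hσ
  rw [← map_pow]
  have : (Multiplicative.ofAdd (1 : ZMod (p ^ n))) ^ (p ^ n) = 1 := by
    rw [← ofAdd_nsmul]; simp
  rw [this, map_one]

lemma aux_dvd (hn : 1 ≤ n) (σ : R)
    (hσ : σ = MonoidAlgebra.of ℤ_[p] (Multiplicative (ZMod (p ^ n)))
      (Multiplicative.ofAdd (1 : ZMod (p ^ n)))) :
    ∃ r : R, (1 - σ) ^ (p ^ n) = (p : R) * r := by
  have hp : p.Prime := Fact.out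
  obtain ⟨r, hr⟩ := exists_add_pow_prime_pow_eq hp (1 : R) (-σ) n
  have hσp : σ ^ (p ^ n) = 1 := aux_sigma_pow σ hσ
  have h1 : (1 : R) - σ = 1 + (-σ) := by ring
  rw [h1, hr, neg_pow, hσp, one_pow, mul_one]
  rcases hp.eq_two_or_odd' with h2 | hodd
  · subst h2
    have hev : Even (2 ^ n) := (Nat.even_pow).2 ⟨even_iff_two_dvd.mpr dvd_rfl, by omega⟩
    rw [hev.neg_one_pow]
    exact ⟨1 + (-σ) * r, by push_cast; ring⟩
  · have hod : Odd (p ^ n) := hodd.pow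
    rw [hod.neg_one_pow]
    exact ⟨-σ * r, by ring⟩

lemma aux_fin (M : Type*) [AddCommGroup M] [Module R M] [Module.Finite R M] :
    Module.Finite ℤ_[p] (RestrictScalars ℤ_[p] R M) :=
  have h1 : Module.Finite ℤ_[p] R := inferInstance
  letI : Module R (RestrictScalars ℤ_[p] R M) := RestrictScalars.moduleOrig _ _ _
  letI : Module.Finite R (RestrictScalars ℤ_[p] R M) := ‹Module.Finite R M›
  Module.Finite.trans R _

end Aux

/-- "N(L) = N(M)" lemma: `G` finite cyclic (here `G = Multiplicative (ZMod (p^n))`,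
generated by `σ = 1`), `M` a finitely generated `ℤ_[p][G]`-module with `H¹(G,M) = 0`
(i.e. the kernel of the norm element `N = Σ_g g` equals the image of `1 - σ`),
and `L ≤ M` a submodule with `N • L = N • M`.  Then `L = M`. -/
theorem stmt1 (p : ℕ) [Fact p.Prime] (n : ℕ) (hn : 1 ≤ n)
    (M : Type*) [AddCommGroup M]
    [Module (MonoidAlgebra ℤ_[p] (Multiplicative (ZMod (p ^ n)))) M]
    [Module.Finite (MonoidAlgebra ℤ_[p] (Multiplicative (ZMod (p ^ n)))) M]
    (σ : MonoidAlgebra ℤ_[p] (Multiplicative (ZMod (p ^ n))))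
    (hσ : σ = MonoidAlgebra.of ℤ_[p] (Multiplicative (ZMod (p ^ n)))
      (Multiplicative.ofAdd (1 : ZMod (p ^ n))))
    (N : MonoidAlgebra ℤ_[p] (Multiplicative (ZMod (p ^ n))))
    (hN : N = ∑ k ∈ Finset.range (p ^ n), σ ^ k)
    (hH1 : ∀ m : M, N • m = 0 → ∃ m' : M, m = m' - σ • m')
    (L : Submodule (MonoidAlgebra ℤ_[p] (Multiplicative (ZMod (p ^ n)))) M)
    (hNL : Submodule.map (LinearMap.lsmul
        (MonoidAlgebra ℤ_[p] (Multiplicative (ZMod (p ^ n)))) M N) L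
      = Submodule.map (LinearMap.lsmul
        (MonoidAlgebra ℤ_[p] (Multiplicative (ZMod (p ^ n)))) M N) ⊤) :
    L = ⊤ := by
  let R := MonoidAlgebra ℤ_[p] (Multiplicative (ZMod (p ^ n)))
  -- Step A: M = L + (1-σ)M elementwise
  have stepA : ∀ m : M, ∃ l ∈ L, ∃ m' : M, m = l + (1 - σ) • m' := by
    intro m
    have hmem : N • m ∈ Submodule.map (LinearMap.lsmul R M N) L := by
      rw [hNL]; exact ⟨m, trivial, rfl⟩
    obtain ⟨l, hl, hlm⟩ := hmem
    simp only [LinearMap.lsmul_apply] at hlm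
    have hz : N • (m - l) = 0 := by rw [smul_sub, hlm, sub_self]
    obtain ⟨m', hm'⟩ := hH1 _ hz
    refine ⟨l, hl, m', ?_⟩
    rw [sub_smul, one_smul, ← hm']
    abel
  -- Step B: iterate
  have stepB : ∀ k : ℕ, ∀ m : M, ∃ l ∈ L, ∃ m' : M, m = l + (1 - σ) ^ k • m' := by
    intro k
    induction k with
    | zero => intro m; exact ⟨0, L.zero_mem, m, by simp⟩
    | succ k ih =>
      intro m
      obtain ⟨l, hl, m', hm'⟩ := ih m
      obtain ⟨l', hl', m'', hm''⟩ := stepA m'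
      refine ⟨l + (1 - σ) ^ k • l', L.add_mem hl (L.smul_mem _ hl'), m'', ?_⟩
      rw [hm', hm'', smul_add, pow_succ, mul_smul]
      abel
  -- Step C: (1-σ)^(p^n) = p * r
  obtain ⟨r, hr⟩ := aux_dvd hn σ hσ
  -- Step D: M = L + pM elementwise
  have stepD : ∀ m : M, ∃ l ∈ L, ∃ m' : M, m = l + (p : R) • m' := by
    intro m
    obtain ⟨l, hl, m', hm'⟩ := stepB (p ^ n) m
    exact ⟨l, hl, r • m', by rw [hm', hr, mul_smul]⟩
  -- Step E: Nakayama on the quotient over ℤ_[p]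
  set Q := M ⧸ L with hQdef
  have hQ : ∀ q : Q, ∃ q' : Q, q = (p : R) • q' := by
    intro q
    obtain ⟨m, rfl⟩ := L.mkQ_surjective q
    obtain ⟨l, hl, m', hm'⟩ := stepD m
    refine ⟨L.mkQ m', ?_⟩
    have h0 : L.mkQ l = 0 := (Submodule.Quotient.mk_eq_zero L).mpr hl
    rw [hm', map_add, map_smul, h0, zero_add]
  letI : @Module ℤ_[p] (RestrictScalars ℤ_[p] R Q) _
      (instAddCommGroupRestrictScalars ℤ_[p] R Q).toAddCommMonoid := RestrictScalars.module ℤ_[p] R Q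
  haveI : Module.Finite ℤ_[p] (RestrictScalars ℤ_[p] R Q) := aux_fin Q
  have hle : (⊤ : Submodule ℤ_[p] (RestrictScalars ℤ_[p] R Q))
      ≤ (IsLocalRing.maximalIdeal ℤ_[p]) • ⊤ := by
    intro x _
    obtain ⟨q', hq'⟩ := hQ ((RestrictScalars.addEquiv ℤ_[p] R Q) x)
    have hx : x = (p : ℤ_[p]) • ((RestrictScalars.addEquiv ℤ_[p] R Q).symm q') := by
      apply (RestrictScalars.addEquiv ℤ_[p] R Q).injective
      show (RestrictScalars.addEquiv ℤ_[p] R Q) x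
        = (algebraMap ℤ_[p] R (p : ℤ_[p])) • q'
      rw [map_natCast]
      exact hq'
    rw [hx]
    refine Submodule.smul_mem_smul ?_ trivial
    simp [IsLocalRing.mem_maximalIdeal, PadicInt.isUnit_iff, (Fact.out : p.Prime).ne_one]
  have hbot := Submodule.eq_bot_of_le_smul_of_le_jacobson_bot
    (IsLocalRing.maximalIdeal ℤ_[p]) (⊤ : Submodule ℤ_[p] (RestrictScalars ℤ_[p] R Q))
    (aux_fin Q).fg_top hle
    (le_of_eq (IsLocalRing.jacobson_eq_maximalIdeal ⊥ bot_ne_top).symm)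
  have hQ0 : ∀ q : Q, q = 0 := by
    intro q
    have : ((RestrictScalars.addEquiv ℤ_[p] R Q).symm q)
        ∈ (⊤ : Submodule ℤ_[p] (RestrictScalars ℤ_[p] R Q)) := trivial
    rw [hbot] at this
    replace this := (Submodule.mem_bot ℤ_[p]).mp this
    have := congrArg (RestrictScalars.addEquiv ℤ_[p] R Q) this
    simpa using this
  ext m
  simp only [Submodule.mem_top, iff_true]
  have := hQ0 (L.mkQ m)
  rwa [Submodule.mkQ_apply, Submodule.Quotient.mk_eq_zero] at this
end

section
/- For a Q_p-irreducible character χ of the cyclic group G = Z/p^nZ, the Herbrand quotient q(χ) = |H⁰(G,V)|/|H¹(G,V)| of the corresponding module equals p^n if χ is the trivial character and 1/p otherwise. -/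
open Polynomial

/-- For `a b : A`, the quotient `ker(a·)/(ker(a·) ∩ im(b·))` on the module `M`,
used to express `H⁰` and `H¹` of a cyclic group acting via multiplication operators. -/
noncomputable def cohQuot (A : Type*) [CommRing A] (M : Type*) [AddCommGroup M]
    [Module A M] (a b : A) :=
  LinearMap.ker (LinearMap.lsmul A M a) ⧸
    Submodule.comap (LinearMap.ker (LinearMap.lsmul A M a)).subtype
      (LinearMap.range (LinearMap.lsmul A M b))

lemma cohQuot_card_one (A : Type*) [CommRing A] (M : Type*) [AddCommGroup M] [Module A M]
    (a b : A) (h : ∀ m : M, a • m = 0 → m = 0) :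
    Nat.card (cohQuot A M a b) = 1 := by
  have hker : LinearMap.ker (LinearMap.lsmul A M a) = ⊥ := by
    rw [LinearMap.ker_eq_bot']
    intro m hm
    exact h m (by simpa using hm)
  unfold cohQuot
  haveI : Subsingleton ↥(LinearMap.ker (LinearMap.lsmul A M a)) := by
    rw [hker]; infer_instance
  haveI := (Submodule.Quotient.mk_surjective
    (Submodule.comap (LinearMap.ker (LinearMap.lsmul A M a)).subtype
      (LinearMap.range (LinearMap.lsmul A M b)))).subsingleton
  exact Nat.card_of_subsingleton (Submodule.Quotient.mk 0)

lemma cohQuot_zero_card (A : Type*) [CommRing A] (b : A) :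
    Nat.card (cohQuot A A 0 b) = Nat.card (A ⧸ Ideal.span {b}) := by
  have hker : LinearMap.ker (LinearMap.lsmul A A (0:A)) = ⊤ := by
    rw [map_zero, LinearMap.ker_zero]
  have hrange : LinearMap.range (LinearMap.lsmul A A b) = Ideal.span {b} := by
    ext z
    simp only [LinearMap.mem_range, LinearMap.lsmul_apply, smul_eq_mul,
      Ideal.mem_span_singleton]
    constructor
    · rintro ⟨y, rfl⟩; exact Dvd.intro _ rfl
    · rintro ⟨c, rfl⟩; exact ⟨c, rfl⟩
  have hmap : Submodule.map ((LinearEquiv.ofTop _ hker : _ ≃ₗ[A] A) : _ →ₗ[A] A)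
      (Submodule.comap (LinearMap.ker (LinearMap.lsmul A A (0:A))).subtype
        (LinearMap.range (LinearMap.lsmul A A b))) = (Ideal.span {b} : Ideal A) := by
    ext z
    simp only [Submodule.mem_map, Submodule.mem_comap, Submodule.coe_subtype]
    constructor
    · rintro ⟨y, hy, rfl⟩
      rw [LinearEquiv.coe_coe, LinearEquiv.ofTop_apply, ← hrange]
      exact hy
    · intro hz
      refine ⟨⟨z, by rw [hker]; trivial⟩, ?_, ?_⟩
      · rw [hrange]; exact hz
      · rw [LinearEquiv.coe_coe, LinearEquiv.ofTop_apply]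
  unfold cohQuot
  exact Nat.card_congr (Submodule.Quotient.equiv _ _ (LinearEquiv.ofTop _ hker) hmap).toEquiv

lemma padic_quot_card (p : ℕ) [Fact p.Prime] (n : ℕ) :
    Nat.card (ℤ_[p] ⧸ Ideal.span {(p : ℤ_[p]) ^ n}) = p ^ n := by
  have hsurj : Function.Surjective (PadicInt.toZModPow n : ℤ_[p] →+* ZMod (p ^ n)) := by
    intro z
    obtain ⟨m, rfl⟩ := ZMod.intCast_surjective z
    exact ⟨m, map_intCast _ m⟩
  have hker : RingHom.ker (PadicInt.toZModPow n : ℤ_[p] →+* ZMod (p ^ n))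
      = Ideal.span {(p : ℤ_[p]) ^ n} := PadicInt.ker_toZModPow n
  rw [← hker, Nat.card_congr (RingHom.quotientKerEquivOfSurjective hsurj).toEquiv,
    Nat.card_zmod]

noncomputable def epsAux (p : ℕ) [Fact p.Prime] :
    (Polynomial ℤ_[p] ⧸ Ideal.span {(X : Polynomial ℤ_[p]) - C 1}) ≃+* ℤ_[p] :=
  (quotientSpanXSubCAlgEquiv (1:ℤ_[p])).toRingEquiv

lemma epsAux_mk (p : ℕ) [Fact p.Prime] (f : Polynomial ℤ_[p]) :
    epsAux p (Ideal.Quotient.mk _ f) = f.eval 1 :=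
  quotientSpanXSubCAlgEquiv_mk 1 f

lemma card_aux (p : ℕ) [Fact p.Prime] (P : Polynomial ℤ_[p]) (hev : P.eval 1 = (p : ℤ_[p])) :
    Nat.card ((Polynomial ℤ_[p] ⧸ Ideal.span {P}) ⧸
      Ideal.span {Ideal.Quotient.mk (Ideal.span {P}) X - 1}) = p := by
  have e0 : Ideal.span {Ideal.Quotient.mk (Ideal.span {P}) X - 1}
      = (Ideal.span {(X : Polynomial ℤ_[p]) - C 1}).map (Ideal.Quotient.mk (Ideal.span {P})) := by
    rw [Ideal.map_span, Set.image_singleton, C_1, map_sub, map_one]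
  have e1 := (Ideal.quotEquivOfEq e0).trans
    (DoubleQuot.quotQuotEquivQuotSup (Ideal.span {P})
      (Ideal.span {(X : Polynomial ℤ_[p]) - C 1}))
  have e2 := (Ideal.quotEquivOfEq
      (sup_comm (Ideal.span {P}) (Ideal.span {(X : Polynomial ℤ_[p]) - C 1}))).trans
    (DoubleQuot.quotQuotEquivQuotSup (Ideal.span {(X : Polynomial ℤ_[p]) - C 1})
      (Ideal.span {P})).symm
  have e3 := Ideal.quotientEquiv
    ((Ideal.span {P}).map (Ideal.Quotient.mk (Ideal.span {(X : Polynomial ℤ_[p]) - C 1}))) _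
    (epsAux p) rfl
  have hmapped : (((Ideal.span {P}).map
        (Ideal.Quotient.mk (Ideal.span {(X : Polynomial ℤ_[p]) - C 1}))).map
        ((epsAux p : _ →+* ℤ_[p]))) = Ideal.span {(p:ℤ_[p])} := by
    rw [Ideal.map_span, Set.image_singleton, Ideal.map_span, Set.image_singleton]
    rw [RingEquiv.coe_toRingHom, epsAux_mk, hev]
  have htot := Nat.card_congr (((e1.trans e2).trans e3).toEquiv)
  rw [htot, hmapped]
  have hpow := padic_quot_card p 1
  rw [pow_one, pow_one] at hpow; exact hpow

set_option maxHeartbeats 1000000 in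
set_option synthInstance.maxHeartbeats 200000 in
/-- The irreducible `ℚ_p`-character lattice `V_k = ℤ_[p][X]/(P_k)` for `G = ℤ/p^nℤ`
acting via multiplication by `X`, where `P_0 = X - 1` and `P_k = Σ_{j<p} X^{j p^{k-1}}`
for `k ≥ 1`.  Its Herbrand quotient `|H⁰(G,V_k)|/|H¹(G,V_k)|` equals `p^n` if `k = 0`
(the trivial character) and `1/p` otherwise; stated without division as
`|H⁰| = p^n·|H¹|` resp. `p·|H⁰| = |H¹|`, where `H⁰ = ker(σ-1)/im(N)` and
`H¹ = ker(N)/im(σ-1)` with `σ = x` (the class of `X`) and `N = Σ_{j<p^n} x^j`. -/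
theorem stmt2 (p : ℕ) [Fact p.Prime] (n : ℕ) (hn : 1 ≤ n) (k : ℕ) (hk : k ≤ n)
    (P : Polynomial ℤ_[p])
    (hP : P = if k = 0 then X - 1 else ∑ j ∈ Finset.range p, X ^ (j * p ^ (k - 1)))
    (x Nx : Polynomial ℤ_[p] ⧸ Ideal.span {P})
    (hx : x = Ideal.Quotient.mk _ X)
    (hNx : Nx = ∑ j ∈ Finset.range (p ^ n), x ^ j) :
    if k = 0 then
      Nat.card (cohQuot _ (Polynomial ℤ_[p] ⧸ Ideal.span {P}) (x - 1) Nx)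
        = p ^ n * Nat.card (cohQuot _ (Polynomial ℤ_[p] ⧸ Ideal.span {P}) Nx (x - 1))
    else
      p * Nat.card (cohQuot _ (Polynomial ℤ_[p] ⧸ Ideal.span {P}) (x - 1) Nx)
        = Nat.card (cohQuot _ (Polynomial ℤ_[p] ⧸ Ideal.span {P}) Nx (x - 1)) := by
  have hpne : (p:ℤ_[p]) ≠ 0 := Nat.cast_ne_zero.mpr (Fact.out : p.Prime).ne_zero
  by_cases hk0 : k = 0
  · -- trivial character
    rw [if_pos hk0]
    have hP0 : P = X - 1 := by rw [hP, if_pos hk0]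
    have ε : (Polynomial ℤ_[p] ⧸ Ideal.span {P}) ≃+* ℤ_[p] :=
      (Ideal.quotEquivOfEq (by rw [hP0, C_1])).trans
        (quotientSpanXSubCAlgEquiv (1:ℤ_[p])).toRingEquiv
    have hx1 : x - 1 = 0 := by
      rw [hx, ← map_one (Ideal.Quotient.mk (Ideal.span {P})), ← map_sub,
        Ideal.Quotient.eq_zero_iff_mem, ← hP0]
      exact Ideal.subset_span rfl
    have hx' : x = 1 := by rwa [sub_eq_zero] at hx1
    have hNxval : Nx = ((p : Polynomial ℤ_[p] ⧸ Ideal.span {P}))^n := by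
      rw [hNx, hx']
      simp only [one_pow, Finset.sum_const, Finset.card_range, nsmul_eq_mul, mul_one]
      push_cast
      ring
    have hεN : ε Nx = (p:ℤ_[p])^n := by rw [hNxval, map_pow, map_natCast]
    have hreg0 : ∀ m : Polynomial ℤ_[p] ⧸ Ideal.span {P}, Nx * m = 0 → m = 0 := by
      intro m hm
      have h2 : ε Nx * ε m = 0 := by rw [← map_mul, hm, map_zero]
      rw [hεN] at h2
      have hm0 : ε m = 0 := by
        rcases mul_eq_zero.mp h2 with h | h
        · exact absurd h (pow_ne_zero n hpne)
        · exact h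
      exact ε.injective (by rw [hm0, map_zero])
    rw [hx1, cohQuot_zero_card,
      cohQuot_card_one _ _ Nx 0 (fun m hm => hreg0 m (by simpa using hm)), mul_one]
    have e3 := Ideal.quotientEquiv (Ideal.span {Nx}) _ ε rfl
    rw [Nat.card_congr e3.toEquiv]
    have hmapped : Ideal.map (ε : (Polynomial ℤ_[p] ⧸ Ideal.span {P}) →+* ℤ_[p])
        (Ideal.span {Nx}) = Ideal.span {(p:ℤ_[p])^n} := by
      rw [Ideal.map_span, Set.image_singleton, RingEquiv.coe_toRingHom, hεN]
    rw [hmapped, padic_quot_card]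
  · -- nontrivial character
    rw [if_neg hk0]
    have hq : p ^ (k-1) * p = p ^ k := by
      rw [← pow_succ]; congr 1; omega
    have hPe : P = ∑ j ∈ Finset.range p, ((X : Polynomial ℤ_[p]) ^ (p^(k-1))) ^ j := by
      rw [hP, if_neg hk0]
      refine Finset.sum_congr rfl fun j _ => ?_
      rw [← pow_mul, mul_comm]
    have hgeo : P * ((X : Polynomial ℤ_[p]) ^ (p^(k-1)) - 1) = X ^ (p^k) - 1 := by
      rw [hPe, geom_sum_mul, ← pow_mul, hq]
    have hmkP : Ideal.Quotient.mk (Ideal.span {P}) P = 0 := by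
      rw [Ideal.Quotient.eq_zero_iff_mem]
      exact Ideal.subset_span rfl
    have hxk : x ^ (p^k) = 1 := by
      have h := congrArg (Ideal.Quotient.mk (Ideal.span {P})) hgeo
      rw [map_mul, hmkP, zero_mul, map_sub, map_pow, map_one] at h
      rw [hx]
      exact sub_eq_zero.mp h.symm
    have hxn : x ^ (p^n) = 1 := by
      have hnk : p ^ n = p ^ k * p ^ (n - k) := by rw [← pow_add]; congr 1; omega
      rw [hnk, pow_mul, hxk, one_pow]
    have hevalP : P.eval 1 = (p:ℤ_[p]) := by
      rw [hP, if_neg hk0]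
      simp [eval_finset_sum]
    have hdiv : ∀ f : Polynomial ℤ_[p],
        ((X : Polynomial ℤ_[p]) - 1) * f ∈ Ideal.span {P} → f ∈ Ideal.span {P} := by
      intro f hf
      rw [Ideal.mem_span_singleton] at hf ⊢
      obtain ⟨g, hg⟩ := hf
      have h1 : g.eval 1 = 0 := by
        have h2 := congrArg (Polynomial.eval 1) hg
        simp only [eval_mul, eval_sub, eval_X, eval_one, sub_self, zero_mul, hevalP] at h2
        exact (mul_eq_zero.mp h2.symm).resolve_left hpne
      obtain ⟨h, hh⟩ := (dvd_iff_isRoot).mpr h1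
      refine ⟨h, ?_⟩
      have hXne : ((X : Polynomial ℤ_[p]) - 1) ≠ 0 := by
        rw [show (1 : Polynomial ℤ_[p]) = C 1 from C_1.symm]
        exact X_sub_C_ne_zero 1
      apply mul_left_cancel₀ hXne
      rw [hg, hh, show (C (1:ℤ_[p]) : Polynomial ℤ_[p]) = 1 from C_1]
      ring
    have hreg : ∀ m : Polynomial ℤ_[p] ⧸ Ideal.span {P}, (x - 1) * m = 0 → m = 0 := by
      intro m hm
      obtain ⟨f, rfl⟩ := Ideal.Quotient.mk_surjective m
      have hmem : (Ideal.Quotient.mk (Ideal.span {P})) (((X : Polynomial ℤ_[p]) - 1) * f)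
          = 0 := by
        rw [map_mul, map_sub, map_one, ← hx]; exact hm
      rw [Ideal.Quotient.eq_zero_iff_mem] at hmem ⊢
      exact hdiv f hmem
    have hNx0 : Nx = 0 := by
      have h2 : Nx * (x - 1) = 0 := by rw [hNx, geom_sum_mul, hxn, sub_self]
      exact hreg Nx (by rwa [mul_comm])
    rw [hNx0,
      cohQuot_card_one _ _ (x-1) 0 (fun m hm => hreg m (by simpa using hm)),
      cohQuot_zero_card, hx, card_aux p P hevalP, mul_one]
end

section
/- Let F/K be a cyclic extension of fields of degree p^n with Galois group generated by σ, with μ_{p^a} ⊆ K. Suppose z, y ∈ F^× satisfy z^{p^a} = y^{1-σ} and N(z) = ξ, a primitive p^a-th root of unity, where N is the norm F→K. Set c = min(n,a), A = Σ_{k=0}^{p^n-1} k σ^k, and r = z^{p^{a-c}A} y^{p^{n-c}}. Then r^{1-σ} = ξ^{p^{a-c}}, so r_0 = r^{p^c} lies in K, and moreover N(y) = r_0. -/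
/-- Lemma (3.2.1): `F/K` cyclic of degree `p^n` with group generated by `σ`,
`μ_{p^a} ⊆ K`, `z, y ∈ F^×` with `z^{p^a} = y^{1-σ}` and `N(z) = ξ` a primitive
`p^a`-th root of unity.  With `c = min n a`, `A = Σ_k k σ^k` and
`r = z^{p^{a-c}A} y^{p^{n-c}}`, one has `r^{1-σ} = ξ^{p^{a-c}}`, hence
`r_0 = r^{p^c}` lies in `K`, and moreover `N(y) = r_0`. -/
theorem stmt4 (p : ℕ) [Fact p.Prime] (n a : ℕ) (hn : 1 ≤ n) (ha : 1 ≤ a)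
    (K F : Type*) [Field K] [Field F] [Algebra K F] [IsGalois K F]
    [FiniteDimensional K F] (hdeg : Module.finrank K F = p ^ n)
    (σ : F ≃ₐ[K] F) (hσ : ∀ τ : F ≃ₐ[K] F, τ ∈ Subgroup.zpowers σ)
    (ξ : K) (hξ : IsPrimitiveRoot ξ (p ^ a))
    (z y : F) (hz : z ≠ 0) (hy : y ≠ 0)
    (hrel : z ^ (p ^ a) = y / σ y)
    (hNz : (∏ k ∈ Finset.range (p ^ n), (σ ^ k) z) = algebraMap K F ξ)
    (c : ℕ) (hc : c = min n a)
    (r : F)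
    (hr : r = (∏ k ∈ Finset.range (p ^ n), ((σ ^ k) z) ^ (k * p ^ (a - c)))
      * y ^ (p ^ (n - c))) :
    r / σ r = algebraMap K F ξ ^ (p ^ (a - c)) ∧
    (∃ r0 : K, algebraMap K F r0 = r ^ (p ^ c)) ∧
    (∏ k ∈ Finset.range (p ^ n), (σ ^ k) y) = r ^ (p ^ c) := by
  have hp : 2 ≤ p := (Fact.out : p.Prime).two_le
  have hcn : c ≤ n := hc ▸ min_le_left n a
  have hca : c ≤ a := hc ▸ min_le_right n a
  set q := p ^ n with hqdef
  set e := p ^ (a - c) with hedef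
  set m := p ^ (n - c) with hmdef
  have hec : e * p ^ c = p ^ a := by rw [hedef, ← pow_add, Nat.sub_add_cancel hca]
  have hmc : m * p ^ c = q := by rw [hmdef, hqdef, ← pow_add, Nat.sub_add_cancel hcn]
  have hqe : q * e = p ^ a * m := by
    rw [hqdef, hedef, hmdef, ← pow_add, ← pow_add]
    congr 1
    omega
  have hσq : σ ^ q = 1 := by
    have hcard : Fintype.card (F ≃ₐ[K] F) = q := by
      rw [← Nat.card_eq_fintype_card, IsGalois.card_aut_eq_finrank, hdeg]
    rw [← hcard]
    exact pow_card_eq_one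
  have hσqz : ∀ x : F, (σ ^ q) x = x := fun x => by rw [hσq]; rfl
  have hzk : ∀ k : ℕ, (σ ^ k) z ≠ 0 := fun k h0 =>
    hz ((σ ^ k).injective (by rw [h0, map_zero]))
  have hσy : σ y ≠ 0 := fun h0 => hy (σ.injective (by rw [h0, map_zero]))
  have hξF : algebraMap K F ξ ≠ 0 := by
    have : ξ ≠ 0 := hξ.ne_zero (pow_ne_zero _ (by omega))
    simpa using this
  have hξpow : algebraMap K F ξ ^ (p ^ a) = 1 := by
    rw [← map_pow, hξ.pow_eq_one, map_one]
  -- shift lemma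
  have shift : ∀ g : ℕ → F,
      (∏ k ∈ Finset.range q, g (k + 1)) * g 0 = (∏ k ∈ Finset.range q, g k) * g q := by
    intro g
    rw [← Finset.prod_range_succ', Finset.prod_range_succ]
  -- P1
  have P1 : (∏ k ∈ Finset.range q, ((σ ^ (k + 1)) z) ^ ((k + 1) * e))
      = (∏ k ∈ Finset.range q, ((σ ^ k) z) ^ (k * e)) * z ^ (q * e) := by
    have := shift (fun k => ((σ ^ k) z) ^ (k * e))
    simpa [hσqz z] using this
  -- P2
  have P2 : (∏ k ∈ Finset.range q, ((σ ^ (k + 1)) z) ^ e)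
      = ∏ k ∈ Finset.range q, ((σ ^ k) z) ^ e := by
    have := shift (fun k => ((σ ^ k) z) ^ e)
    simp only [hσqz z, pow_zero] at this
    exact mul_right_cancel₀ (pow_ne_zero _ hz) (by simpa using this)
  -- star identity
  have P3 : (∏ k ∈ Finset.range q, ((σ ^ (k + 1)) z) ^ (k * e))
        * ∏ k ∈ Finset.range q, ((σ ^ k) z) ^ e
      = (∏ k ∈ Finset.range q, ((σ ^ k) z) ^ (k * e)) * z ^ (q * e) := by
    rw [← P1, ← P2, ← Finset.prod_mul_distrib]
    apply Finset.prod_congr rfl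
    intro k _
    rw [← pow_add, add_one_mul]
  have hσr : σ r = (∏ k ∈ Finset.range q, ((σ ^ (k + 1)) z) ^ (k * e)) * (σ y) ^ m := by
    rw [hr, map_mul, map_prod, map_pow]
    congr 1
    apply Finset.prod_congr rfl
    intro k _
    rw [map_pow, ← AlgEquiv.mul_apply, ← pow_succ']
  have hzqe : z ^ (q * e) * (σ y) ^ m = y ^ m := by
    rw [hqe, pow_mul, hrel, div_pow, div_mul_cancel₀ _ (pow_ne_zero _ hσy)]
  have part1eq : r = algebraMap K F ξ ^ e * σ r := by
    rw [hσr, hr, ← hNz, ← Finset.prod_pow, ← mul_assoc,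
      mul_comm (∏ k ∈ Finset.range q, ((σ ^ k) z) ^ e), P3, mul_assoc, hzqe]
  have hrne : r ≠ 0 := by
    rw [hr]
    exact mul_ne_zero (Finset.prod_ne_zero_iff.mpr fun k _ => pow_ne_zero _ (hzk k))
      (pow_ne_zero _ hy)
  have hσrne : σ r ≠ 0 := fun h0 => hrne (σ.injective (by rw [h0, map_zero]))
  have part1 : r / σ r = algebraMap K F ξ ^ e := by
    nth_rewrite 1 [part1eq]
    exact mul_div_cancel_right₀ _ hσrne
  refine ⟨part1, ?_, ?_⟩
  · -- r ^ p^c is fixed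
    have hfix : σ (r ^ p ^ c) = r ^ p ^ c := by
      have hσr' : σ r = r / algebraMap K F ξ ^ e := by
        rw [eq_div_iff (pow_ne_zero _ hξF), mul_comm]
        exact part1eq.symm
      rw [map_pow, hσr', div_pow, ← pow_mul, hec, hξpow, div_one]
    have hfixall : ∀ k : ℕ, (σ ^ k) (r ^ p ^ c) = r ^ p ^ c := by
      intro k
      induction k with
      | zero => rfl
      | succ k ih => rw [pow_succ, AlgEquiv.mul_apply, hfix, ih]
    have hmem : r ^ p ^ c ∈ (⊥ : IntermediateField K F) := by
      have hFF : IntermediateField.fixedField (⊤ : Subgroup (F ≃ₐ[K] F)) = ⊥ := by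
        rw [← IntermediateField.fixingSubgroup_bot (F := K) (E := F), IsGalois.fixedField_fixingSubgroup]
      rw [← hFF]
      intro g
      obtain ⟨k, hk⟩ := mem_powers_iff_mem_zpowers.mpr (hσ (g : F ≃ₐ[K] F))
      have : (g : F ≃ₐ[K] F) (r ^ p ^ c) = r ^ p ^ c := by rw [← hk]; exact hfixall k
      exact this
    obtain ⟨r0, hr0⟩ := IntermediateField.mem_bot.mp hmem
    exact ⟨r0, hr0⟩
  · -- norm of y
    set T : ℕ → F := fun k => (∏ j ∈ Finset.range k, (σ ^ j) z) ^ (p ^ a) with hT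
    have hTne : ∀ k, T k ≠ 0 := fun k =>
      pow_ne_zero _ (Finset.prod_ne_zero_iff.mpr fun j _ => hzk j)
    have base : y = σ y * z ^ (p ^ a) := by
      rw [hrel, mul_comm, div_mul_cancel₀ _ hσy]
    have step1 : ∀ k : ℕ, y = (σ ^ k) y * T k := by
      intro k
      induction k with
      | zero => simp [hT]
      | succ k ih =>
        have h2 : (σ ^ k) y = (σ ^ (k + 1)) y * ((σ ^ k) z) ^ (p ^ a) := by
          conv_lhs => rw [base]
          rw [map_mul, map_pow, ← AlgEquiv.mul_apply, ← pow_succ]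
        have hTsucc : T (k + 1) = T k * ((σ ^ k) z) ^ (p ^ a) := by
          rw [hT]
          simp only [Finset.prod_range_succ, mul_pow]
        conv_lhs => rw [ih, h2]
        rw [hTsucc]
        ring
    have step2 : y ^ q = (∏ k ∈ Finset.range q, (σ ^ k) y) * ∏ k ∈ Finset.range q, T k := by
      rw [← Finset.prod_mul_distrib,
        Finset.prod_congr rfl (fun k _ => (step1 k).symm : ∀ k ∈ Finset.range q, (σ ^ k) y * T k = y),
        Finset.prod_const, Finset.card_range]
    have step3 : ∀ M : ℕ,
        (∏ k ∈ Finset.range (M + 1), T k) * ∏ j ∈ Finset.range (M + 1), ((σ ^ j) z) ^ (j * p ^ a)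
        = (∏ j ∈ Finset.range (M + 1), (σ ^ j) z) ^ (M * p ^ a) := by
      intro M
      induction M with
      | zero => simp [hT]
      | succ M ih =>
        have hTsucc : T (M + 1) = (∏ j ∈ Finset.range (M + 1), (σ ^ j) z) ^ (p ^ a) := rfl
        rw [Finset.prod_range_succ (f := T), Finset.prod_range_succ
          (f := fun j => ((σ ^ j) z) ^ (j * p ^ a))]
        calc (∏ k ∈ Finset.range (M + 1), T k) * T (M + 1) *
              ((∏ j ∈ Finset.range (M + 1), ((σ ^ j) z) ^ (j * p ^ a)) *
                ((σ ^ (M + 1)) z) ^ ((M + 1) * p ^ a))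
            = ((∏ k ∈ Finset.range (M + 1), T k) *
                ∏ j ∈ Finset.range (M + 1), ((σ ^ j) z) ^ (j * p ^ a)) *
              (T (M + 1) * ((σ ^ (M + 1)) z) ^ ((M + 1) * p ^ a)) := by ring
          _ = (∏ j ∈ Finset.range (M + 1), (σ ^ j) z) ^ (M * p ^ a) *
              ((∏ j ∈ Finset.range (M + 1), (σ ^ j) z) ^ (p ^ a) *
                ((σ ^ (M + 1)) z) ^ ((M + 1) * p ^ a)) := by rw [ih, hTsucc]
          _ = (∏ j ∈ Finset.range (M + 1), (σ ^ j) z) ^ ((M + 1) * p ^ a) *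
              ((σ ^ (M + 1)) z) ^ ((M + 1) * p ^ a) := by
                rw [show (M + 1) * p ^ a = M * p ^ a + p ^ a by ring, pow_add]
                ring
          _ = (∏ j ∈ Finset.range (M + 1 + 1), (σ ^ j) z) ^ ((M + 1) * p ^ a) := by
                simp only [Finset.prod_range_succ, mul_pow]
    have hq1 : q = (q - 1) + 1 := by
      have : 1 ≤ q := Nat.one_le_pow _ _ (by omega)
      omega
    have step3' : (∏ k ∈ Finset.range q, T k) * ∏ j ∈ Finset.range q, ((σ ^ j) z) ^ (j * p ^ a)
        = 1 := by
      rw [hq1, step3 (q - 1), ← hq1, hNz, mul_comm, pow_mul, hξpow, one_pow]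
    have hrpc : r ^ p ^ c
        = (∏ j ∈ Finset.range q, ((σ ^ j) z) ^ (j * p ^ a)) * y ^ q := by
      rw [hr, mul_pow, ← pow_mul, hmc, ← Finset.prod_pow]
      congr 1
      apply Finset.prod_congr rfl
      intro k _
      rw [← pow_mul, mul_assoc, hec]
    have key : (∏ k ∈ Finset.range q, (σ ^ k) y) * ∏ k ∈ Finset.range q, T k
        = r ^ p ^ c * ∏ k ∈ Finset.range q, T k := by
      rw [← step2, hrpc]
      calc y ^ q = ((∏ k ∈ Finset.range q, T k) *
            ∏ j ∈ Finset.range q, ((σ ^ j) z) ^ (j * p ^ a)) * y ^ q := by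
              rw [step3', one_mul]
        _ = (∏ j ∈ Finset.range q, ((σ ^ j) z) ^ (j * p ^ a)) * y ^ q *
            ∏ k ∈ Finset.range q, T k := by ring
    exact mul_right_cancel₀ (Finset.prod_ne_zero_iff.mpr fun k _ => hTne k) key
end

section
/- Let F/K be a cyclic extension of fields of degree p^n with Galois group generated by σ, μ_{p^a} ⊆ K, and c = min(n,a). Suppose z, y ∈ F^× and x_0 ∈ K^× satisfy z^{p^a} = x_0 · y^{1-σ} and N(z)^{p^{a-c}} = ξ · x_0^{p^{n-c}} with ξ a root of unity of order p^c. Then r = z^{p^{a-c}A} y^{p^{n-c}} satisfies r^{1-σ} = ξ, r_0 := r^{p^c} ∈ K^×, and N(y) = r_0 / x_0^{p^n(p^n-1)/2}. -/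
open Finset

lemma key_telescope {K F : Type*} [Field K] [Field F] [Algebra K F]
    (σ : F ≃ₐ[K] F) (N : ℕ) (hσN : σ ^ N = 1) (u : F) (hu : u ≠ 0) :
    (∏ k ∈ range N, ((σ ^ k) u) ^ k) * u ^ N
      = σ (∏ k ∈ range N, ((σ ^ k) u) ^ k) * ∏ k ∈ range N, (σ ^ k) u := by
  have hshift : ∀ k : ℕ, σ ((σ ^ k) u) = (σ ^ (k + 1)) u := by
    intro k; rw [pow_succ']; rfl
  have h1 : σ (∏ k ∈ range N, ((σ ^ k) u) ^ k)
      = ∏ k ∈ range N, ((σ ^ (k + 1)) u) ^ k := by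
    rw [map_prod]; exact Finset.prod_congr rfl fun k _ => by rw [map_pow, hshift]
  have hN : (σ ^ N) u = u := by rw [hσN]; rfl
  have h2 : ∏ k ∈ range N, (σ ^ (k + 1)) u = ∏ k ∈ range N, (σ ^ k) u := by
    have e1 := Finset.prod_range_succ' (fun k => (σ ^ k) u) N
    have e2 := Finset.prod_range_succ (fun k => (σ ^ k) u) N
    simp only [pow_zero, AlgEquiv.one_apply, hN] at e1 e2
    exact mul_right_cancel₀ hu (e1.symm.trans e2)
  rw [h1, h2.symm]
  have h3 : (∏ k ∈ range N, ((σ ^ (k + 1)) u) ^ k) * ∏ k ∈ range N, (σ ^ (k + 1)) u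
      = ∏ k ∈ range N, ((σ ^ (k + 1)) u) ^ (k + 1) := by
    rw [← Finset.prod_mul_distrib]; exact Finset.prod_congr rfl fun k _ => (pow_succ _ _).symm
  rw [h3]
  have e1 := Finset.prod_range_succ' (fun k => ((σ ^ k) u) ^ k) N
  have e2 := Finset.prod_range_succ (fun k => ((σ ^ k) u) ^ k) N
  simp only [pow_zero, hN] at e1 e2
  rw [← e1.symm.trans e2]; ring



/-- Lemma (3.5.7): `F/K` cyclic of degree `p^n` generated by `σ`, `μ_{p^a} ⊆ K`,
`c = min n a`.  If `z^{p^a} = x₀ · y^{1-σ}` with `x₀ ∈ K^×` and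
`N(z)^{p^{a-c}} = ξ · x₀^{p^{n-c}}` with `ξ` of order `p^c`, then
`r = z^{p^{a-c}A} y^{p^{n-c}}` satisfies `r^{1-σ} = ξ`, `r₀ = r^{p^c} ∈ K`, and
`N(y) = r₀ / x₀^{p^n(p^n-1)/2}`. -/
theorem stmt5 (p : ℕ) [Fact p.Prime] (n a : ℕ) (hn : 1 ≤ n) (ha : 1 ≤ a)
    (K F : Type*) [Field K] [Field F] [Algebra K F] [IsGalois K F]
    [FiniteDimensional K F] (hdeg : Module.finrank K F = p ^ n)
    (σ : F ≃ₐ[K] F) (hσ : ∀ τ : F ≃ₐ[K] F, τ ∈ Subgroup.zpowers σ)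
    (hμK : ∃ ζ : K, IsPrimitiveRoot ζ (p ^ a))
    (c : ℕ) (hc : c = min n a)
    (ξ : K) (hξ : IsPrimitiveRoot ξ (p ^ c))
    (x₀ : K) (hx₀ : x₀ ≠ 0)
    (z y : F) (hz : z ≠ 0) (hy : y ≠ 0)
    (hrel : z ^ (p ^ a) = algebraMap K F x₀ * (y / σ y))
    (hNz : (∏ k ∈ Finset.range (p ^ n), (σ ^ k) z) ^ (p ^ (a - c))
      = algebraMap K F (ξ * x₀ ^ (p ^ (n - c))))
    (r : F)
    (hr : r = (∏ k ∈ Finset.range (p ^ n), ((σ ^ k) z) ^ (k * p ^ (a - c)))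
      * y ^ (p ^ (n - c))) :
    r / σ r = algebraMap K F ξ ∧
    (∃ r0 : K, algebraMap K F r0 = r ^ (p ^ c)) ∧
    (∏ k ∈ Finset.range (p ^ n), (σ ^ k) y)
      = r ^ (p ^ c) / algebraMap K F x₀ ^ (p ^ n * (p ^ n - 1) / 2) := by
  have hca : c ≤ a := hc ▸ min_le_right n a
  have hcn : c ≤ n := hc ▸ min_le_left n a
  set N := p ^ n with hN
  set m := p ^ (a - c) with hm
  set q := p ^ (n - c) with hq
  -- group order
  have hcard : Fintype.card (F ≃ₐ[K] F) = N := by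
    rw [Fintype.card_eq_nat_card, IsGalois.card_aut_eq_finrank, hdeg]
  have hσN : σ ^ N = 1 := by rw [← hcard]; exact pow_card_eq_one
  -- nonvanishing
  have hne : ∀ (u : F), u ≠ 0 → ∀ k : ℕ, (σ ^ k) u ≠ 0 := by
    intro u hu k h
    exact hu ((map_eq_zero_iff _ (σ ^ k).injective).mp h)
  have hσy : σ y ≠ 0 := fun h => hy (by simpa using congrArg σ.symm h)
  set x₀F := algebraMap K F x₀ with hx₀F
  have hx₀F0 : x₀F ≠ 0 := by
    simpa [hx₀F] using (map_ne_zero (algebraMap K F)).mpr hx₀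
  set ξF := algebraMap K F ξ with hξF
  have hξ0 : ξ ≠ 0 := hξ.ne_zero (pow_ne_zero _ (Fact.out : p.Prime).ne_zero)
  have hξF0 : ξF ≠ 0 := by simpa [hξF] using (map_ne_zero (algebraMap K F)).mpr hξ0
  have hNm : N * m = p ^ a * q := by
    rw [hN, hm, hq, ← pow_add, ← pow_add]; congr 1; omega
  have hmpc : m * p ^ c = p ^ a := by rw [hm, ← pow_add]; congr 1; omega
  have hqpc : q * p ^ c = N := by rw [hq, hN, ← pow_add]; congr 1; omega
  set Pz := ∏ k ∈ range N, ((σ ^ k) z) ^ k with hPz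
  set Py := ∏ k ∈ range N, ((σ ^ k) y) ^ k with hPy
  set Nz := ∏ k ∈ range N, (σ ^ k) z with hNzdef
  set Ny := ∏ k ∈ range N, (σ ^ k) y with hNydef
  have hPz0 : Pz ≠ 0 := Finset.prod_ne_zero_iff.mpr fun k _ => pow_ne_zero _ (hne z hz k)
  have hPy0 : Py ≠ 0 := Finset.prod_ne_zero_iff.mpr fun k _ => pow_ne_zero _ (hne y hy k)
  have hσPz0 : σ Pz ≠ 0 := fun h => hPz0 (by simpa using congrArg σ.symm h)
  have hσPy0 : σ Py ≠ 0 := fun h => hPy0 (by simpa using congrArg σ.symm h)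
  have keyz : Pz * z ^ N = σ Pz * Nz := key_telescope σ N hσN z hz
  have keyy : Py * y ^ N = σ Py * Ny := key_telescope σ N hσN y hy
  -- rewrite r
  have hrP : r = Pz ^ m * y ^ q := by
    rw [hr, ← Finset.prod_pow]
    congr 1
    exact Finset.prod_congr rfl fun k _ => pow_mul _ _ _
  have hσr : σ r = σ Pz ^ m * σ y ^ q := by rw [hrP, map_mul, map_pow, map_pow]
  -- hNz rewritten
  have hNzm : Nz ^ m = ξF * x₀F ^ q := by rw [hNzdef, hNz, map_mul, map_pow]
  -- main equation for goal 1
  have E1 : Pz ^ m * (x₀F * (y / σ y)) ^ q = σ Pz ^ m * (ξF * x₀F ^ q) := by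
    have e := congrArg (· ^ m) keyz
    simp only [mul_pow] at e
    rw [← pow_mul, hNm, pow_mul, hrel, hNzm] at e
    exact e
  have hσrne : σ Pz ^ m * σ y ^ q ≠ 0 :=
    mul_ne_zero (pow_ne_zero _ hσPz0) (pow_ne_zero _ hσy)
  have goal1 : r / σ r = ξF := by
    rw [hσr, hrP, div_eq_iff hσrne]
    have E2 : Pz ^ m * y ^ q * x₀F ^ q = ξF * (σ Pz ^ m * σ y ^ q) * x₀F ^ q := by
      have hs : (σ y) ^ q ≠ 0 := pow_ne_zero _ hσy
      rw [mul_pow, div_pow] at E1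
      calc Pz ^ m * y ^ q * x₀F ^ q = (Pz ^ m * (x₀F ^ q * (y ^ q / σ y ^ q))) * σ y ^ q := by
            rw [← mul_div_assoc, ← mul_div_assoc, div_mul_cancel₀ _ hs]; ring
        _ = ξF * (σ Pz ^ m * σ y ^ q) * x₀F ^ q := by rw [E1]; ring
    exact mul_right_cancel₀ (pow_ne_zero _ hx₀F0) E2
  refine ⟨goal1, ?_, ?_⟩
  · -- r ^ p^c is fixed
    have hσr0 : σ r ≠ 0 := hσr ▸ hσrne
    have hrξ : r = ξF * σ r := by
      rw [← goal1, div_mul_cancel₀ r hσr0]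
    have hξpc : ξF ^ p ^ c = 1 := by
      rw [hξF, ← map_pow, hξ.pow_eq_one, map_one]
    have hfix : σ (r ^ p ^ c) = r ^ p ^ c := by
      conv_rhs => rw [hrξ]
      rw [map_pow, mul_pow, hξpc, one_mul]
    have hall : ∀ τ : F ≃ₐ[K] F, τ (r ^ p ^ c) = r ^ p ^ c := by
      intro τ
      have hst : σ ∈ MulAction.stabilizer (F ≃ₐ[K] F) (r ^ p ^ c) := hfix
      have := (Subgroup.zpowers_le.mpr hst) (hσ τ)
      exact this
    have hmem : r ^ p ^ c ∈ IntermediateField.fixedField (⊤ : Subgroup (F ≃ₐ[K] F)) :=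
      fun g => hall g
    rw [show IntermediateField.fixedField (⊤ : Subgroup (F ≃ₐ[K] F)) = ⊥ by
      rw [← IntermediateField.fixingSubgroup_bot, IsGalois.fixedField_fixingSubgroup],
      IntermediateField.mem_bot] at hmem
    obtain ⟨r0, hr0⟩ := hmem
    exact ⟨r0, hr0⟩
  · -- norm formula
    set S := ∑ k ∈ range N, k with hS
    have hPza : Pz ^ p ^ a = x₀F ^ S * (Py / σ Py) := by
      have h1 : σ Py = ∏ k ∈ range N, ((σ ^ (k + 1)) y) ^ k := by
        rw [hPy, map_prod]
        exact Finset.prod_congr rfl fun k _ => by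
          rw [map_pow, show σ ((σ ^ k) y) = (σ ^ (k + 1)) y by rw [pow_succ']; rfl]
      rw [hPz, ← Finset.prod_pow]
      have step : ∀ k ∈ range N,
          (((σ ^ k) z) ^ k) ^ p ^ a
            = x₀F ^ k * (((σ ^ k) y) ^ k / ((σ ^ (k + 1)) y) ^ k) := by
        intro k _
        have : ((σ ^ k) z) ^ p ^ a = (σ ^ k) (z ^ p ^ a) := (map_pow _ _ _).symm
        rw [← pow_right_comm, this, hrel, map_mul, map_div₀,
          show (σ ^ k) (σ y) = (σ ^ (k + 1)) y by rw [pow_succ]; simp [AlgEquiv.mul_apply],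
          AlgEquiv.commutes, ← hx₀F, mul_pow, div_pow]
      rw [Finset.prod_congr rfl step, Finset.prod_mul_distrib, Finset.prod_div_distrib,
        Finset.prod_pow_eq_pow_sum, ← h1, ← hS]
    have rc : r ^ p ^ c = x₀F ^ S * Ny := by
      rw [hrP, mul_pow, ← pow_mul, ← pow_mul, hmpc, hqpc, hPza]
      field_simp
      linear_combination keyy
    have hSval : p ^ n * (p ^ n - 1) / 2 = S := (Finset.sum_range_id N).symm
    rw [hSval, rc, mul_comm, mul_div_assoc, div_self (pow_ne_zero _ hx₀F0), mul_one]
end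

section
/- Let K be a 2-adic field with i ∉ K and such that Gal(K[μ_{2^∞}]/K), viewed inside Z_2^× via the cyclotomic character, contains -1 (the non-procyclic case). Then for every root of unity ξ ∈ μ_{K(i)} of 2-power order, N_{K(i)/K}(ξ) = 1, and any cyclic 2-extension of K containing a cyclotomic subextension K_m with [K_m:K] = 2^m forces m ≤ 1. -/
open IntermediateField Polynomial

set_option maxHeartbeats 1600000
set_option synthInstance.maxHeartbeats 400000

private lemma zmod8_sq_ne_neg_one : ∀ v : (ZMod 8)ˣ, v * v ≠ -1 := by decide

/-- Lemma (3.3.1), special case 2: `K` a 2-adic field with `i ∉ K` and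
`Gal(K[μ_{2^∞}]/K)` not procyclic (it contains the inversion `φ⁻¹(-1)`).  Then
every 2-power root of unity `ζ ∈ μ_{K(i)}` has `N_{K(i)/K}(ζ) = 1`, and any
cyclic 2-extension `L/K` can only contain a cyclotomic subextension
`K_m = K(ζ)` of degree `2^m` with `m ≤ 1`. -/
theorem stmt7 (K : Type*) [Field K] [Algebra ℚ_[2] K] [FiniteDimensional ℚ_[2] K]
    (hμK : ∀ ζ : K, (∃ k : ℕ, ζ ^ (2 ^ k) = 1) → ζ = 1 ∨ ζ = -1)
    (hi : ¬ ∃ x : K, x ^ 2 = -1)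
    (i : AlgebraicClosure K) (hisq : i ^ 2 = -1)
    (hnotpro : ∃ τ : AlgebraicClosure K ≃ₐ[K] AlgebraicClosure K,
      ∀ ζ : AlgebraicClosure K, ζ ≠ 0 → (∃ k : ℕ, ζ ^ (2 ^ k) = 1) → τ ζ = ζ⁻¹) :
    (∀ ζ : K⟮i⟯, (∃ k : ℕ, ζ ^ (2 ^ k) = 1) → Algebra.norm K ζ = 1) ∧
    (∀ L : IntermediateField K (AlgebraicClosure K), IsGalois K L →
      IsCyclic (L ≃ₐ[K] L) → (∃ nL : ℕ, Module.finrank K L = 2 ^ nL) →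
      ∀ ζ : AlgebraicClosure K, ζ ∈ L → (∃ k : ℕ, ζ ^ (2 ^ k) = 1) →
        Module.finrank K K⟮ζ⟯ ≤ 2) := by
  classical
  obtain ⟨τ, hτ⟩ := hnotpro
  haveI : CharZero K := charZero_of_injective_algebraMap (algebraMap ℚ_[2] K).injective
  haveI : CharZero (AlgebraicClosure K) :=
    charZero_of_injective_algebraMap (algebraMap K (AlgebraicClosure K)).injective
  -- the minimal polynomial of a square root of -1 is X^2 + 1
  have hirr : Irreducible (X ^ 2 - C (-1 : K)) :=
    X_pow_sub_C_irreducible_of_prime Nat.prime_two (fun b hb => hi ⟨b, hb⟩)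
  have rank2 : ∀ x : AlgebraicClosure K, x ^ 2 = -1 → Module.finrank K K⟮x⟯ = 2 := by
    intro x hx
    have hint : IsIntegral K x := (Algebra.IsAlgebraic.isAlgebraic x).isIntegral
    have hmin : minpoly K x = X ^ 2 - C (-1 : K) := by
      refine (minpoly.eq_of_irreducible_of_monic hirr ?_ ?_).symm
      · simp [hx]
      · exact monic_X_pow_sub_C _ (two_ne_zero)
    rw [IntermediateField.adjoin.finrank hint, hmin, natDegree_X_pow_sub_C]
  -- basic facts about i
  have hi0 : i ≠ 0 := by
    intro h
    rw [h] at hisq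
    simp only [ne_eq, OfNat.ofNat_ne_zero, not_false_eq_true, zero_pow] at hisq
    exact one_ne_zero (neg_eq_zero.mp hisq.symm)
  have hi4 : i ^ 4 = 1 := by
    have h : i ^ 4 = (i ^ 2) ^ 2 := by ring
    rw [h, hisq]; ring
  have hm1ne1 : (-1 : AlgebraicClosure K) ≠ 1 := by
    intro h
    have : (2 : AlgebraicClosure K) = 0 := by linear_combination -h
    norm_num at this
  constructor
  · -- Part 1 : norms of 2-power roots of unity in K(i) are 1
    rintro ζ ⟨k, hk⟩
    have hint : IsIntegral K i := (Algebra.IsAlgebraic.isAlgebraic i).isIntegral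
    -- i is a primitive 4-th root of unity
    have hiord : orderOf i = 4 := by
      have h1 : orderOf i ∣ 2 ^ 2 := orderOf_dvd_of_pow_eq_one (by norm_num; exact hi4)
      obtain ⟨a, ha, hoa⟩ := (Nat.dvd_prime_pow Nat.prime_two).mp h1
      interval_cases a
      · rw [pow_zero] at hoa
        have h1' := orderOf_eq_one_iff.mp hoa
        rw [h1', one_pow] at hisq
        exact (hm1ne1 hisq.symm).elim
      · exfalso
        have h2 : i ^ 2 = 1 := by
          have := pow_orderOf_eq_one i
          rwa [hoa] at this
        rw [hisq] at h2
        exact hm1ne1 h2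
      · rw [hoa]; norm_num
    have hiprim : IsPrimitiveRoot i ((4 : ℕ+) : ℕ) := by
      have := IsPrimitiveRoot.orderOf i
      rwa [hiord] at this
    haveI : NeZero (((4 : ℕ+) : ℕ) : K) := ⟨by norm_num⟩
    haveI : IsCyclotomicExtension {((4 : ℕ+) : ℕ)} K K⟮i⟯ := by
      haveI := hiprim.adjoin_isCyclotomicExtension K
      exact IsCyclotomicExtension.equiv _ _ _
        (Subalgebra.equivOfEq _ _ (adjoin_simple_toSubalgebra_of_isAlgebraic hint.isAlgebraic).symm)
    haveI : IsGalois K K⟮i⟯ := IsCyclotomicExtension.isGalois {((4 : ℕ+) : ℕ)} K _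
    haveI : FiniteDimensional K K⟮i⟯ := IntermediateField.adjoin.finiteDimensional hint
    -- the restriction of τ to K(i)
    set c : K⟮i⟯ ≃ₐ[K] K⟮i⟯ := τ.restrictNormal K⟮i⟯ with hc
    have hcspec : ∀ x : K⟮i⟯, x ≠ 0 → (∃ k' : ℕ, x ^ (2 ^ k') = 1) → c x = x⁻¹ := by
      rintro x hx0 ⟨k', hk'⟩
      apply (algebraMap K⟮i⟯ (AlgebraicClosure K)).injective
      rw [AlgEquiv.restrictNormal_commutes, map_inv₀]
      refine hτ _ ((_root_.map_ne_zero _).mpr hx0) ⟨k', ?_⟩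
      rw [← map_pow, hk', map_one]
    have hgen0 : AdjoinSimple.gen K i ≠ 0 := by
      intro h
      apply hi0
      have := congrArg (algebraMap K⟮i⟯ (AlgebraicClosure K)) h
      rwa [AdjoinSimple.algebraMap_gen, map_zero] at this
    have hcgen : c (AdjoinSimple.gen K i) = (AdjoinSimple.gen K i)⁻¹ := by
      refine hcspec _ hgen0 ⟨2, ?_⟩
      apply (algebraMap K⟮i⟯ (AlgebraicClosure K)).injective
      rw [map_pow, AdjoinSimple.algebraMap_gen, map_one]
      norm_num
      exact hi4
    have hcne : c ≠ 1 := by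
      intro h
      rw [h] at hcgen
      simp only [AlgEquiv.one_apply] at hcgen
      have h1 := congrArg (algebraMap K⟮i⟯ (AlgebraicClosure K)) hcgen
      rw [AdjoinSimple.algebraMap_gen, map_inv₀, AdjoinSimple.algebraMap_gen] at h1
      have h2 : i ^ 2 = 1 := by
        rw [sq]
        field_simp at h1
        linear_combination h1
      rw [hisq] at h2
      exact hm1ne1 h2
    have hcard : Fintype.card (K⟮i⟯ ≃ₐ[K] K⟮i⟯) = 2 := by
      rw [← Nat.card_eq_fintype_card, IsGalois.card_aut_eq_finrank, rank2 i hisq]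
    have huniv : (Finset.univ : Finset (K⟮i⟯ ≃ₐ[K] K⟮i⟯)) = {1, c} := by
      symm
      apply Finset.eq_univ_of_card
      rw [Finset.card_insert_of_notMem (by simpa using hcne.symm), Finset.card_singleton, hcard]
    have hζ0 : ζ ≠ 0 := by
      rintro rfl
      rw [zero_pow (by positivity)] at hk
      exact zero_ne_one hk
    have hnorm := Algebra.norm_eq_prod_automorphisms K ζ
    rw [huniv, Finset.prod_insert (by simpa using hcne.symm), Finset.prod_singleton,
      AlgEquiv.one_apply, hcspec ζ hζ0 ⟨k, hk⟩, mul_inv_cancel₀ hζ0] at hnorm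
    apply (algebraMap K K⟮i⟯).injective
    rw [hnorm, map_one]
  · -- Part 2
    rintro L hGal hcyc ⟨nL, hnL⟩ ζ hζL ⟨k, hk⟩
    haveI := hGal
    have hζ0 : ζ ≠ 0 := by
      rintro rfl
      rw [zero_pow (by positivity)] at hk
      exact zero_ne_one hk
    have hdvd : orderOf ζ ∣ 2 ^ k := orderOf_dvd_of_pow_eq_one hk
    obtain ⟨j, hjk, hordj⟩ := (Nat.dvd_prime_pow Nat.prime_two).mp hdvd
    by_cases hj2 : j ≤ 2
    · -- small order : ζ^4 = 1
      have h4 : ζ ^ 4 = 1 := by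
        have h := orderOf_dvd_iff_pow_eq_one.mp (hordj ▸ pow_dvd_pow 2 hj2)
        norm_num at h
        exact h
      have hsplit : (ζ ^ 2 - 1) * (ζ ^ 2 + 1) = 0 := by linear_combination h4
      rcases mul_eq_zero.mp hsplit with h | h
      · have h1 : ζ = 1 ∨ ζ = -1 := by
          have h' : (ζ - 1) * (ζ + 1) = 0 := by linear_combination h
          rcases mul_eq_zero.mp h' with h'' | h''
          · exact Or.inl (by linear_combination h'')
          · exact Or.inr (by linear_combination h'')
        have hmem : ζ ∈ (⊥ : IntermediateField K (AlgebraicClosure K)) := by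
          rcases h1 with rfl | rfl
          · exact one_mem _
          · exact neg_mem (one_mem _)
        rw [adjoin_simple_eq_bot_iff.mpr hmem, IntermediateField.finrank_bot]
        norm_num
      · have h2 : ζ ^ 2 = -1 := by linear_combination h
        rw [rank2 ζ h2]
    · -- j ≥ 3
      push_neg at hj2
      have hj3 : 3 ≤ j := hj2
      have hnpos : 0 < 2 ^ j := by positivity
      set N : ℕ+ := ⟨2 ^ j, hnpos⟩ with hN
      have hn8 : 8 ∣ ((N : ℕ+) : ℕ) := by
        show (8 : ℕ) ∣ 2 ^ j
        have h := pow_dvd_pow 2 hj3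
        norm_num at h
        exact h
      have hprim : IsPrimitiveRoot ζ ((N : ℕ+) : ℕ) := by
        have := IsPrimitiveRoot.orderOf ζ
        rwa [hordj] at this
      have hint : IsIntegral K ζ := (Algebra.IsAlgebraic.isAlgebraic ζ).isIntegral
      haveI : NeZero ((((N : ℕ+) : ℕ)) : K) := ⟨Nat.cast_ne_zero.mpr hnpos.ne'⟩
      haveI : IsCyclotomicExtension {((N : ℕ+) : ℕ)} K K⟮ζ⟯ := by
        haveI := hprim.adjoin_isCyclotomicExtension K
        exact IsCyclotomicExtension.equiv _ _ _
          (Subalgebra.equivOfEq _ _ (adjoin_simple_toSubalgebra_of_isAlgebraic hint.isAlgebraic).symm)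
      haveI : IsGalois K K⟮ζ⟯ := IsCyclotomicExtension.isGalois {((N : ℕ+) : ℕ)} K _
      haveI : FiniteDimensional K K⟮ζ⟯ := IntermediateField.adjoin.finiteDimensional hint
      haveI : NeZero ((N : ℕ+) : ℕ) := ⟨hnpos.ne'⟩
      -- the primitive root inside K⟮ζ⟯
      set ζ' : K⟮ζ⟯ := AdjoinSimple.gen K ζ with hζ'def
      have hζ' : IsPrimitiveRoot ζ' ((N : ℕ+) : ℕ) :=
        (IsPrimitiveRoot.coe_submonoidClass_iff).mp hprim
      set f := hζ'.autToPow K with hf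
      have hinj : Function.Injective f := hζ'.autToPow_injective K
      -- the restriction of τ to K⟮ζ⟯
      set c : K⟮ζ⟯ ≃ₐ[K] K⟮ζ⟯ := τ.restrictNormal K⟮ζ⟯ with hc
      have hζ'0 : ζ' ≠ 0 := by
        intro h
        apply hζ0
        have := congrArg (algebraMap K⟮ζ⟯ (AlgebraicClosure K)) h
        rwa [AdjoinSimple.algebraMap_gen, map_zero] at this
      have hcζ' : c ζ' = ζ'⁻¹ := by
        apply (algebraMap K⟮ζ⟯ (AlgebraicClosure K)).injective
        rw [AlgEquiv.restrictNormal_commutes, map_inv₀, AdjoinSimple.algebraMap_gen]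
        exact hτ ζ hζ0 ⟨k, hk⟩
      -- the image of c under autToPow is -1
      have hfc : f c = -1 := by
        have hspec := hζ'.autToPow_spec K c
        rw [hcζ'] at hspec
        have hpow : ζ' ^ ((((f c) : ZMod ((N : ℕ+) : ℕ))).val + 1) = 1 := by
          rw [pow_succ, hspec, inv_mul_cancel₀ hζ'0]
        have hdvd' := hζ'.dvd_of_pow_eq_one _ hpow
        have hzero : (((f c) : ZMod ((N : ℕ+) : ℕ))) + 1 = 0 := by
          have h := (ZMod.natCast_eq_zero_iff _ _).mpr hdvd'
          push_cast at h
          rwa [ZMod.natCast_val, ZMod.cast_id] at h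
        exact Units.ext (eq_neg_of_add_eq_zero_left hzero)
      -- K⟮ζ⟯ ≤ L gives cyclicity of the Galois group
      have hFL : K⟮ζ⟯ ≤ L := adjoin_simple_le_iff.mpr hζL
      letI : Algebra K⟮ζ⟯ L := (IntermediateField.inclusion hFL).toRingHom.toAlgebra
      haveI : IsScalarTower K K⟮ζ⟯ L := IsScalarTower.of_algebraMap_eq' rfl
      haveI : FiniteDimensional K L := Module.finite_of_finrank_pos (by rw [hnL]; positivity)
      haveI : FiniteDimensional K⟮ζ⟯ L := Module.Finite.right K K⟮ζ⟯ L
      have hsurj : Function.Surjective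
          (AlgEquiv.restrictNormalHom (F := K) (K₁ := L) K⟮ζ⟯) :=
        AlgEquiv.restrictNormalHom_surjective L
      haveI : IsCyclic (K⟮ζ⟯ ≃ₐ[K] K⟮ζ⟯) := isCyclic_of_surjective _ hsurj
      -- suppose the degree is > 2
      by_contra hdgt
      push_neg at hdgt
      have hddvd : Module.finrank K K⟮ζ⟯ ∣ 2 ^ nL :=
        hnL ▸ ⟨Module.finrank K⟮ζ⟯ L, (Module.finrank_mul_finrank K K⟮ζ⟯ L).symm⟩
      obtain ⟨m, hm, hdm⟩ := (Nat.dvd_prime_pow Nat.prime_two).mp hddvd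
      have hm2 : 2 ≤ m := by
        by_contra hm1
        push_neg at hm1
        interval_cases m <;> omega
      obtain ⟨g, hg⟩ := IsCyclic.exists_generator (α := K⟮ζ⟯ ≃ₐ[K] K⟮ζ⟯)
      have hgord : orderOf g = Module.finrank K K⟮ζ⟯ := by
        have h1 := orderOf_eq_card_of_forall_mem_zpowers hg
        have h2 := IsGalois.card_aut_eq_finrank K K⟮ζ⟯
        exact h1.trans h2
      obtain ⟨t, ht0⟩ := mem_powers_iff_mem_zpowers.mpr (hg c)
      have ht : g ^ t = c := ht0
      have humap : ZMod.unitsMap hn8 (-1) = -1 := by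
        apply Units.ext
        simp [ZMod.unitsMap_def]
      rcases Nat.even_or_odd t with he | ho
      · obtain ⟨s, hs⟩ := he
        subst hs
        rw [pow_add] at ht
        have hsq : f (g ^ s) * f (g ^ s) = -1 := by
          rw [← map_mul, ht, hfc]
        apply zmod8_sq_ne_neg_one (ZMod.unitsMap hn8 (f (g ^ s)))
        rw [← map_mul, hsq, humap]
      · -- t odd : c would generate the whole group, but c has order 2
        have hc2 : c ^ 2 = 1 := by
          apply hinj
          rw [map_pow, hfc, map_one]
          exact neg_one_sq
        have hcne1 : c ≠ 1 := by
          intro h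
          rw [h, map_one] at hfc
          have h8 := congrArg (ZMod.unitsMap hn8) hfc
          rw [map_one, humap] at h8
          exact (by decide : (1 : (ZMod 8)ˣ) ≠ -1) h8
        have hcord : orderOf c = 2 := orderOf_eq_prime hc2 hcne1
        have hcop : Nat.Coprime (Module.finrank K K⟮ζ⟯) t := by
          rw [hdm]
          exact Nat.Coprime.pow_left m
            (Nat.prime_two.coprime_iff_not_dvd.mpr (by
              rcases ho with ⟨r, rfl⟩; omega))
        have hcd : orderOf c = Module.finrank K K⟮ζ⟯ := by
          rw [← ht, orderOf_pow, hgord, Nat.Coprime.gcd_eq_one hcop, Nat.div_one]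
        omega
end

section
/- Let F = K(i) with K a 2-adic field, i ∉ K, μ_F = μ_{2^l} generated by ξ_F, and set θ such that N_{F/K}(1-ξ_F) = 2 - 2cos θ formally (i.e. N(1-ξ_F) = (1-ξ_F)(1-ξ_F^{-1})). Then none of -1, N(1-ξ_F), and -N(1-ξ_F) is a square in K^×. -/
/-- Lemma (3.6.9): `F = K(i)` over a 2-adic field `K` with `i ∉ K`,
`μ_F = μ_{2^l}` generated by `ξ_F` (`l ≥ 2`, `σ(ξ_F) = ξ_F⁻¹`), and
`N(1-ξ_F) = (1-ξ_F)(1-ξ_F⁻¹) = 2 - 2cos θ ∈ K`.  Then none of `-1`,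
`N(1-ξ_F)` and `-N(1-ξ_F)` is a square in `K^×`. -/
theorem stmt10 (K F : Type*) [Field K] [Algebra ℚ_[2] K] [FiniteDimensional ℚ_[2] K]
    [Field F] [Algebra K F] (hdeg : Module.finrank K F = 2)
    (hi : ¬ ∃ x : K, x ^ 2 = -1)
    (i : F) (hisq : i ^ 2 = -1)
    (σ : F ≃ₐ[K] F) (hσ : σ ≠ AlgEquiv.refl)
    (l : ℕ) (hl : 2 ≤ l)
    (ξF : F) (hξF : IsPrimitiveRoot ξF (2 ^ l))
    (hinv : σ ξF = ξF⁻¹)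
    (hμmax : ¬ ∃ ζ : F, IsPrimitiveRoot ζ (2 ^ (l + 1)))
    (ν : K) (hν : algebraMap K F ν = (1 - ξF) * (1 - ξF⁻¹)) :
    (¬ ∃ s : K, s ^ 2 = -1) ∧ (¬ ∃ s : K, s ^ 2 = ν) ∧ (¬ ∃ s : K, s ^ 2 = -ν) := by
  have h2l : (1:ℕ) < 2 ^ l := by
    have : (2:ℕ)^1 ≤ 2^l := Nat.pow_le_pow_right (by norm_num) (by omega)
    omega
  have hξ0 : ξF ≠ 0 := by
    intro h
    have := hξF.pow_eq_one
    rw [h, zero_pow (by positivity)] at this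
    exact zero_ne_one this
  have hξ1 : ξF ≠ 1 := hξF.ne_one h2l
  have h1ξ : (1 : F) - ξF ≠ 0 := sub_ne_zero.mpr hξ1.symm
  -- key: no square root of ξF in F
  have key : ∀ ζ : F, ζ ^ 2 = ξF → False := by
    intro ζ hζ
    have hpow : ζ ^ (2 ^ (l + 1)) = 1 := by
      rw [pow_succ, pow_mul', hζ, hξF.pow_eq_one]
    have hnot : ζ ^ (2 ^ l) ≠ 1 := by
      intro h
      have : ξF ^ (2 ^ (l - 1)) = 1 := by
        rw [← hζ, ← pow_mul]
        have : 2 * 2 ^ (l - 1) = 2 ^ l := by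
          rw [← pow_succ']
          congr 1
          omega
        rw [this]
        exact h
      have := Nat.le_of_dvd (by positivity) (hξF.dvd_of_pow_eq_one _ this)
      have h2 : (2:ℕ) ^ (l - 1) < 2 ^ l := Nat.pow_lt_pow_right (by norm_num) (by omega)
      omega
    have hdvd : orderOf ζ ∣ 2 ^ (l + 1) := orderOf_dvd_of_pow_eq_one hpow
    obtain ⟨k, hk, hke⟩ := (Nat.dvd_prime_pow Nat.prime_two).mp hdvd
    have hkeq : k = l + 1 := by
      by_contra h
      have : orderOf ζ ∣ 2 ^ l := hke ▸ pow_dvd_pow 2 (by omega)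
      exact hnot (orderOf_dvd_iff_pow_eq_one.mp this)
    have : IsPrimitiveRoot ζ (2 ^ (l + 1)) := by
      have := IsPrimitiveRoot.orderOf ζ
      rwa [hke, hkeq] at this
    exact hμmax ⟨ζ, this⟩
  have hν' : algebraMap K F ν = -(1 - ξF) ^ 2 * ξF⁻¹ := by
    rw [hν]
    field_simp
    ring
  refine ⟨hi, ?_, ?_⟩
  · rintro ⟨s, hs⟩
    have hu : (algebraMap K F s) ^ 2 = -(1 - ξF) ^ 2 * ξF⁻¹ := by
      rw [← map_pow, hs, hν']
    have hu0 : algebraMap K F s ≠ 0 := by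
      intro h
      rw [h] at hu
      simp only [ne_eq, zero_pow, OfNat.ofNat_ne_zero, not_false_eq_true] at hu
      have := hu.symm
      rw [neg_mul, neg_eq_zero, mul_eq_zero] at this
      rcases this with h' | h'
      · exact h1ξ (pow_eq_zero_iff (by norm_num) |>.mp h')
      · exact hξ0 (inv_eq_zero.mp h')
    exact key (i * (1 - ξF) / algebraMap K F s) (by
      field_simp
      rw [hisq, hu]
      field_simp)
  · rintro ⟨s, hs⟩
    have hu : (algebraMap K F s) ^ 2 = (1 - ξF) ^ 2 * ξF⁻¹ := by
      rw [← map_pow, hs, map_neg, hν']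
      ring
    have hu0 : algebraMap K F s ≠ 0 := by
      intro h
      rw [h] at hu
      simp only [ne_eq, zero_pow, OfNat.ofNat_ne_zero, not_false_eq_true] at hu
      have := hu.symm
      rw [mul_eq_zero] at this
      rcases this with h' | h'
      · exact h1ξ (pow_eq_zero_iff (by norm_num) |>.mp h')
      · exact hξ0 (inv_eq_zero.mp h')
    exact key ((1 - ξF) / algebraMap K F s) (by
      field_simp
      rw [hu]
      field_simp)
end

section
/- Let G = Z/p^nZ with generator σ, and let W = ⟨X,S,T⟩/⟨S^P X^Q T^R⟩ be the Z_p[G]-module which is the quotient of Z_p ⊕ Z_p[G] ⊕ Z_p[G] (with σ acting trivially on the first factor) by the cyclic submodule generated by the single relation S^P X^Q T^R = 1, for P, Q, R ∈ Z_p[G]. If P(ξ) ≠ 0 for all p^n-th roots of unity ξ, then the character of Q_p ⊗ W equals χ_reg + 1. -/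
open Polynomial

set_option synthInstance.maxHeartbeats 1000000
set_option maxHeartbeats 1000000

noncomputable section

/-- The ideal `(X^{p^n} - 1)` of `ℚ_p[X]`. -/
def Ig (p n : ℕ) [Fact p.Prime] : Ideal (Polynomial ℚ_[p]) :=
  Ideal.span {(X : Polynomial ℚ_[p]) ^ p ^ n - 1}

/-- The group ring `ℚ_p[G] ≅ ℚ_p[X]/(X^{p^n}-1)` for `G = ℤ/p^nℤ`. -/
abbrev GQ (p n : ℕ) [Fact p.Prime] := Polynomial ℚ_[p] ⧸ Ig p n

/-- The ideal `(σ - 1)` of `ℚ_p[G]`. -/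
def I0 (p n : ℕ) [Fact p.Prime] : Ideal (GQ p n) :=
  Ideal.span {Ideal.Quotient.mk (Ig p n) ((X : Polynomial ℚ_[p]) - 1)}

/-- The trivial `ℚ_p[G]`-module `ℚ_p ≅ ℚ_p[G]/(σ - 1)`. -/
abbrev G0Q (p n : ℕ) [Fact p.Prime] := GQ p n ⧸ I0 p n

/-- The free module `M ⊗ ℚ_p = ℚ_p·X ⊕ ℚ_p[G]·S ⊕ ℚ_p[G]·T`
(with `σ` acting trivially on the first factor). -/
abbrev MQ (p n : ℕ) [Fact p.Prime] := G0Q p n × GQ p n × GQ p n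

/-- The relation `q = S^P X^Q T^R` (written additively: `X`-component `Q`,
`S`-component `P`, `T`-component `R`), with `P, Q, R ∈ ℤ_p[G]` mapped into `ℚ_p[G]`. -/
def qQ (p n : ℕ) [Fact p.Prime] (P Q R : Polynomial ℤ_[p]) : MQ p n :=
  (Ideal.Quotient.mk (I0 p n)
      (Ideal.Quotient.mk (Ig p n) (Polynomial.map PadicInt.Coe.ringHom Q)),
   Ideal.Quotient.mk (Ig p n) (Polynomial.map PadicInt.Coe.ringHom P),
   Ideal.Quotient.mk (Ig p n) (Polynomial.map PadicInt.Coe.ringHom R))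

/-- `ℚ_p ⊗ W` where `W = ⟨X,S,T⟩/⟨S^P X^Q T^R⟩`. -/
abbrev WQ (p n : ℕ) [Fact p.Prime] (P Q R : Polynomial ℤ_[p]) :=
  MQ p n ⧸ Submodule.span (GQ p n) {qQ p n P Q R}




/-- General form: if `Pb` is invertible, `(A⧸I × A × A) ⧸ ⟨(mk Qb, Pb, Rb)⟩ ≅ A⧸I × A`. -/
theorem aux_quot_equiv {A : Type*} [CommRing A] (I : Ideal A) (Pb Qb Rb v : A)
    (hvP : v * Pb = 1) :
    Nonempty ((((A ⧸ I) × A × A) ⧸ Submodule.span A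
        {((Ideal.Quotient.mk I Qb, Pb, Rb) : (A ⧸ I) × A × A)})
      ≃ₗ[A] (A ⧸ I) × A) := by
  classical
  set mk0 : A →ₗ[A] A ⧸ I := I.mkQ with hmk0
  have hmk0' : ∀ x : A, Ideal.Quotient.mk I x = mk0 x := fun x => rfl
  let π : ((A ⧸ I) × A × A) →ₗ[A] (A ⧸ I) × A :=
    { toFun := fun m => (m.1 - mk0 (v * Qb * m.2.1), m.2.2 - v * Rb * m.2.1)
      map_add' := by
        intro a b
        ext
        · simp only [Prod.fst_add, Prod.snd_add]
          rw [mul_add, map_add]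
          abel
        · simp only [Prod.fst_add, Prod.snd_add]
          ring
      map_smul' := by
        intro c m
        ext
        · simp only [Prod.smul_fst, Prod.smul_snd, RingHom.id_apply, smul_eq_mul]
          rw [smul_sub, ← map_smul]
          congr 1
          simp only [smul_eq_mul]
          ring
        · simp only [Prod.smul_fst, Prod.smul_snd, RingHom.id_apply, smul_eq_mul,
            mul_sub]
          ring }
  have hπ : ∀ m : (A ⧸ I) × A × A,
      π m = (m.1 - mk0 (v * Qb * m.2.1), m.2.2 - v * Rb * m.2.1) := fun _ => rfl
  have hsurj : Function.Surjective π := by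
    intro y
    refine ⟨(y.1, 0, y.2), ?_⟩
    rw [hπ]
    simp
  have hker : LinearMap.ker π
      = Submodule.span A {((Ideal.Quotient.mk I Qb, Pb, Rb) : (A ⧸ I) × A × A)} := by
    apply le_antisymm
    · intro m hm
      rw [LinearMap.mem_ker, hπ, Prod.mk_eq_zero, sub_eq_zero, sub_eq_zero] at hm
      obtain ⟨h1, h2⟩ := hm
      rw [Submodule.mem_span_singleton]
      refine ⟨v * m.2.1, ?_⟩
      have : (v * m.2.1) • ((Ideal.Quotient.mk I Qb, Pb, Rb) : (A ⧸ I) × A × A)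
          = ((v * m.2.1) • mk0 Qb, (v * m.2.1) * Pb, (v * m.2.1) * Rb) := rfl
      rw [this]
      have e1 : (v * m.2.1) • mk0 Qb = mk0 (v * Qb * m.2.1) := by
        rw [← map_smul]; congr 1; simp only [smul_eq_mul]; ring
      have e2 : (v * m.2.1) * Pb = m.2.1 := by
        rw [mul_comm v m.2.1, mul_assoc, hvP, mul_one]
      have e3 : (v * m.2.1) * Rb = v * Rb * m.2.1 := by ring
      rw [e1, e2, e3, ← h1, ← h2]
    · rw [Submodule.span_le, Set.singleton_subset_iff, SetLike.mem_coe, LinearMap.mem_ker,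
        hπ, Prod.mk_eq_zero]
      constructor
      · rw [sub_eq_zero, hmk0']
        congr 1
        rw [mul_assoc, mul_comm Qb Pb, ← mul_assoc, hvP, one_mul]
      · rw [sub_eq_zero, mul_assoc, mul_comm Rb Pb, ← mul_assoc, hvP, one_mul]
  exact ⟨(Submodule.quotEquivOfEq _ _ hker.symm).trans
    (π.quotKerEquivOfSurjective hsurj)⟩

/-- If `P(ξ) ≠ 0` for every `p^n`-th root of unity `ξ`, then the image of `P` in
`ℚ_p[G] = ℚ_p[X]/(X^{p^n}-1)` is a unit. -/
lemma isUnit_mkP (p n : ℕ) [Fact p.Prime] (P : Polynomial ℤ_[p])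
    (hP : ∀ ξ : AlgebraicClosure ℚ_[p], ξ ^ p ^ n = 1 →
      Polynomial.eval₂
        ((algebraMap ℚ_[p] (AlgebraicClosure ℚ_[p])).comp PadicInt.Coe.ringHom)
        ξ P ≠ 0) :
    IsUnit (Ideal.Quotient.mk (Ig p n) (Polynomial.map PadicInt.Coe.ringHom P)) := by
  have hcop : IsCoprime (Polynomial.map PadicInt.Coe.ringHom P)
      ((X : Polynomial ℚ_[p]) ^ p ^ n - 1) := by
    refine (Polynomial.isCoprime_iff_aeval_ne_zero_of_isAlgClosed (k := ℚ_[p])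
      (AlgebraicClosure ℚ_[p]) (Polynomial.map PadicInt.Coe.ringHom P)
      ((X : Polynomial ℚ_[p]) ^ p ^ n - 1)).mpr ?_
    intro a
    by_cases ha : (aeval a) ((X : Polynomial ℚ_[p]) ^ p ^ n - 1) = 0
    · left
      have ha' : a ^ p ^ n = 1 := by
        simp only [map_sub, map_pow, aeval_X, map_one, sub_eq_zero] at ha
        exact ha
      have := hP a ha'
      rw [aeval_def, eval₂_map]
      exact this
    · right; exact ha
  obtain ⟨u, v, huv⟩ := hcop
  have hmkf : Ideal.Quotient.mk (Ig p n) ((X : Polynomial ℚ_[p]) ^ p ^ n - 1) = 0 := by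
    rw [Ideal.Quotient.eq_zero_iff_mem, Ig]
    exact Ideal.subset_span rfl
  refine IsUnit.of_mul_eq_one (Ideal.Quotient.mk (Ig p n) u) ?_
  have h2 := congrArg (Ideal.Quotient.mk (Ig p n)) huv
  simp only [map_add, map_mul, map_one, hmkf, mul_zero, add_zero] at h2
  rw [mul_comm] at h2
  exact h2

/-- If `P(ξ) ≠ 0` for every `p^n`-th root of unity `ξ`, then the character of
`ℚ_p ⊗ W`, where `W = ⟨X,S,T⟩/⟨S^P X^Q T^R⟩` over `ℤ_p[G]`, equals `χ_reg + 1`,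
i.e. `ℚ_p ⊗ W ≅ ℚ_p[G] ⊕ (trivial)` as `ℚ_p[G]`-modules. -/
theorem stmt11 (p n : ℕ) [Fact p.Prime] (hn : 1 ≤ n) (P Q R : Polynomial ℤ_[p])
    (hP : ∀ ξ : AlgebraicClosure ℚ_[p], ξ ^ p ^ n = 1 →
      Polynomial.eval₂
        ((algebraMap ℚ_[p] (AlgebraicClosure ℚ_[p])).comp PadicInt.Coe.ringHom)
        ξ P ≠ 0) :
    Nonempty (WQ p n P Q R ≃ₗ[GQ p n] G0Q p n × GQ p n) := by
  obtain ⟨u, hu⟩ := isUnit_mkP p n P hP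
  have hvP : (↑u⁻¹ : GQ p n) * Ideal.Quotient.mk (Ig p n)
      (Polynomial.map PadicInt.Coe.ringHom P) = 1 := by
    rw [← hu]; exact Units.inv_mul u
  have hq : qQ p n P Q R
      = ((Ideal.Quotient.mk (I0 p n)
            (Ideal.Quotient.mk (Ig p n) (Polynomial.map PadicInt.Coe.ringHom Q)),
          Ideal.Quotient.mk (Ig p n) (Polynomial.map PadicInt.Coe.ringHom P),
          Ideal.Quotient.mk (Ig p n) (Polynomial.map PadicInt.Coe.ringHom R))
        : MQ p n) := rfl
  have := aux_quot_equiv (A := GQ p n) (I0 p n)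
    (Ideal.Quotient.mk (Ig p n) (Polynomial.map PadicInt.Coe.ringHom P))
    (Ideal.Quotient.mk (Ig p n) (Polynomial.map PadicInt.Coe.ringHom Q))
    (Ideal.Quotient.mk (Ig p n) (Polynomial.map PadicInt.Coe.ringHom R))
    (↑u⁻¹) hvP
  exact this

end
end
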